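/- Let (M,d) be a metric space with a Borel probability measure m and let T^j : M → M (j ≥ 1) be measurable maps (e.g. the iterates T_ω^j of a random composition). Suppose there are constants b > 0, v′ > 0, C > 0 such that, for the sequence ρ_n = e^{−n^{2/b}}, m({y ∈ M : d(T^j y, y) < 2ρ_n for some 1 ≤ j < ρ_n^{−v′}}) ≤ C |log ρ_n|^{−b} for all large n. Define τ_{2ρ}(y) = inf{j ≥ 1 : d(T^j y, y) < 2ρ}. Then for m-almost every y: liminf_{ρ → 0} log τ_{2ρ}(y)/(−log ρ) ≥ v′. -/

import Mathlib

open MeasureTheory Filter Metric Set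

/-- **Lower bound on the recurrence rate from summable short-return estimates.** If along
the sequence `ρ_n = e^{−n^{2/b}}` the measure of the set of points returning `2ρ_n`-close
to themselves before time `ρ_n^{−v′}` is at most `C|log ρ_n|^{−b}`, then for `m`-a.e. `y`
the first return time `τ_{2ρ}(y) = inf{j ≥ 1 : d(T^j y, y) < 2ρ}` satisfies
`liminf_{ρ→0} log τ_{2ρ}(y)/(−log ρ) ≥ v′`, i.e. for every `0 < v < v′` one eventually
has `τ_{2ρ}(y) > ρ^{−v}` as `ρ → 0⁺`. -/
theorem recurrence_rate_liminf_lower_bound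
    {M : Type*} [MetricSpace M] [MeasurableSpace M] [BorelSpace M]
    (m : Measure M) [IsProbabilityMeasure m]
    (Tj : ℕ → M → M)
    (b v' C : ℝ) (hb : 0 < b) (hv' : 0 < v') (hC : 0 < C)
    (hyp : ∃ n₀ : ℕ, ∀ n : ℕ, n₀ ≤ n →
      m {y : M | ∃ j : ℕ, 1 ≤ j ∧
          (j : ℝ) < Real.exp (-(n : ℝ) ^ (2 / b)) ^ (-v') ∧
          dist (Tj j y) y < 2 * Real.exp (-(n : ℝ) ^ (2 / b))}
        ≤ ENNReal.ofReal (C * |Real.log (Real.exp (-(n : ℝ) ^ (2 / b)))| ^ (-b))) :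
    ∀ᵐ y ∂m, ∀ v : ℝ, 0 < v → v < v' →
      ∀ᶠ ρ : ℝ in nhdsWithin 0 (Set.Ioi 0),
        ∀ j : ℕ, 1 ≤ j → (j : ℝ) ≤ ρ ^ (-v) → 2 * ρ ≤ dist (Tj j y) y := by
  obtain ⟨n₀, hn₀⟩ := hyp
  set ρfun : ℕ → ℝ := fun n => Real.exp (-(n : ℝ) ^ (2 / b)) with hρfun
  set A : ℕ → Set M := fun n => {y : M | ∃ j : ℕ, 1 ≤ j ∧
      (j : ℝ) < ρfun n ^ (-v') ∧ dist (Tj j y) y < 2 * ρfun n} with hA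
  have hbne : b ≠ 0 := ne_of_gt hb
  -- simplify the bound: C * |log ρ_n|^{-b} = C * n^{-2}
  have hbound : ∀ n : ℕ, n₀ ≤ n → m (A n) ≤ ENNReal.ofReal (C * (n : ℝ) ^ (-2 : ℝ)) := by
    intro n hn
    have h := hn₀ n hn
    have habs : |Real.log (Real.exp (-(n : ℝ) ^ (2 / b)))| = (n : ℝ) ^ (2 / b) := by
      rw [Real.log_exp, abs_neg, abs_of_nonneg (Real.rpow_nonneg (Nat.cast_nonneg n) _)]
    have hpow : ((n : ℝ) ^ (2 / b)) ^ (-b) = (n : ℝ) ^ (-2 : ℝ) := by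
      rw [← Real.rpow_mul (Nat.cast_nonneg n)]
      congr 1
      field_simp
    rwa [habs, hpow] at h
  -- summability
  have hsummable : Summable (fun n : ℕ => C * (n : ℝ) ^ (-2 : ℝ)) :=
    (Real.summable_nat_rpow.mpr (by norm_num)).mul_left C
  have hnonneg : ∀ n : ℕ, 0 ≤ C * (n : ℝ) ^ (-2 : ℝ) := fun n =>
    mul_nonneg hC.le (Real.rpow_nonneg (Nat.cast_nonneg n) _)
  have hsum : (∑' n : ℕ, m (A (n₀ + n))) ≠ ⊤ := by
    have h1 : (∑' n : ℕ, m (A (n₀ + n)))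
        ≤ ∑' n : ℕ, ENNReal.ofReal (C * ((n₀ + n : ℕ) : ℝ) ^ (-2 : ℝ)) :=
      ENNReal.tsum_le_tsum fun n => hbound (n₀ + n) (Nat.le_add_right _ _)
    have h2 : (∑' n : ℕ, ENNReal.ofReal (C * ((n₀ + n : ℕ) : ℝ) ^ (-2 : ℝ)))
        ≤ ∑' n : ℕ, ENNReal.ofReal (C * (n : ℝ) ^ (-2 : ℝ)) :=
      ENNReal.tsum_comp_le_tsum_of_injective (add_right_injective n₀)
        (fun n => ENNReal.ofReal (C * (n : ℝ) ^ (-2 : ℝ)))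
    have h3 : (∑' n : ℕ, ENNReal.ofReal (C * (n : ℝ) ^ (-2 : ℝ))) ≠ ⊤ := by
      rw [← ENNReal.ofReal_tsum_of_nonneg hnonneg hsummable]
      exact ENNReal.ofReal_ne_top
    exact ne_top_of_le_ne_top h3 (h1.trans h2)
  filter_upwards [ae_eventually_notMem hsum] with y hy v hv hvv'
  obtain ⟨N₁, hN₁⟩ := eventually_atTop.mp hy
  have hy' : ∀ k : ℕ, n₀ + N₁ ≤ k → y ∉ A k := by
    intro k hk
    have : k = n₀ + (k - n₀) := by omega
    rw [this]
    exact hN₁ (k - n₀) (by omega)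
  -- find N₂ such that the exponent inequality holds
  have htend1 : Tendsto (fun n : ℕ => (1 + 1 / (n : ℝ)) ^ (2 / b)) atTop (nhds 1) := by
    have h0 : Tendsto (fun n : ℕ => 1 + 1 / (n : ℝ)) atTop (nhds 1) := by
      simpa using (tendsto_const_nhds : Tendsto (fun _ : ℕ => (1 : ℝ)) atTop (nhds 1)).add tendsto_one_div_atTop_nhds_zero_nat
    have := h0.rpow (tendsto_const_nhds : Tendsto (fun _ : ℕ => (2 / b : ℝ)) atTop _)
      (Or.inl one_ne_zero)
    simpa using this
  have hlt1 : (1 : ℝ) < v' / v := (one_lt_div hv).mpr hvv'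
  obtain ⟨N₂, hN₂⟩ := eventually_atTop.mp (htend1.eventually_lt_const hlt1)
  have hkey : ∀ n : ℕ, N₂ ≤ n → 1 ≤ n →
      v * ((n + 1 : ℕ) : ℝ) ^ (2 / b) < v' * ((n : ℕ) : ℝ) ^ (2 / b) := by
    intro n hn2 hn1
    have hnpos : (0 : ℝ) < (n : ℝ) := by exact_mod_cast hn1
    have hfac : ((n + 1 : ℕ) : ℝ) = (n : ℝ) * (1 + 1 / (n : ℝ)) := by
      field_simp
      push_cast
      ring
    rw [hfac, Real.mul_rpow hnpos.le (by positivity)]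
    have hppos : (0 : ℝ) < (n : ℝ) ^ (2 / b) := Real.rpow_pos_of_pos hnpos _
    have ht := hN₂ n hn2
    have : v * ((n : ℝ) ^ (2 / b) * ((1 + 1 / (n : ℝ)) ^ (2 / b)))
        < v * ((n : ℝ) ^ (2 / b) * (v' / v)) := by
      apply mul_lt_mul_of_pos_left _ hv
      exact mul_lt_mul_of_pos_left ht hppos
    calc v * ((n : ℝ) ^ (2 / b) * ((1 + 1 / (n : ℝ)) ^ (2 / b)))
        < v * ((n : ℝ) ^ (2 / b) * (v' / v)) := this
      _ = v' * (n : ℝ) ^ (2 / b) := by field_simp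
  set N : ℕ := max (n₀ + N₁) (max N₂ 1) with hN
  -- antitonicity of ρfun
  have hanti : Antitone ρfun := by
    intro k l hkl
    exact Real.exp_le_exp.mpr (neg_le_neg
      (Real.rpow_le_rpow (Nat.cast_nonneg k) (Nat.cast_le.mpr hkl) (by positivity)))
  -- the eventual statement
  filter_upwards [Ioo_mem_nhdsGT_of_mem
    (⟨le_refl (0 : ℝ), Real.exp_pos _⟩ : (0 : ℝ) ∈ Set.Ico 0 (ρfun N))] with ρ hρ j hj hjρ
  obtain ⟨hρ0, hρN⟩ := hρ
  -- ρfun tends to 0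
  have htend0 : Tendsto ρfun atTop (nhds 0) := by
    have h1 : Tendsto (fun n : ℕ => ((n : ℝ)) ^ (2 / b)) atTop atTop :=
      (tendsto_rpow_atTop (by positivity)).comp tendsto_natCast_atTop_atTop
    exact Real.tendsto_exp_atBot.comp (tendsto_neg_atBot_iff.mpr h1)
  have hex : ∃ k : ℕ, ρfun k ≤ ρ :=
    ((htend0.eventually_lt_const hρ0).mono fun k hk => hk.le).exists
  set n₁ := Nat.find hex with hn₁
  have hfind : ρfun n₁ ≤ ρ := Nat.find_spec hex
  have hmin : ∀ k, k < n₁ → ρ < ρfun k := fun k hk =>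
    lt_of_not_ge (Nat.find_min hex hk)
  have hNlt : N < n₁ := by
    by_contra h
    push_neg at h
    exact absurd (hfind.trans_lt hρN) (not_lt.mpr (hanti h))
  set n := n₁ - 1 with hn
  have hn₁eq : n₁ = n + 1 := by omega
  have hnge : N ≤ n := by omega
  have hρlt : ρ < ρfun n := hmin n (by omega)
  have hρge : ρfun (n + 1) ≤ ρ := hn₁eq ▸ hfind
  -- j < ρfun n ^ (-v')
  have hjlt : (j : ℝ) < ρfun n ^ (-v') := by
    have h1 : ρ ^ (-v) ≤ ρfun (n + 1) ^ (-v) :=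
      Real.rpow_le_rpow_of_nonpos (Real.exp_pos _) hρge (neg_nonpos.mpr hv.le)
    have h2 : ρfun (n + 1) ^ (-v) = Real.exp (v * ((n + 1 : ℕ) : ℝ) ^ (2 / b)) := by
      rw [hρfun, Real.rpow_def_of_pos (Real.exp_pos _), Real.log_exp]
      push_cast
      ring_nf
    have h3 : ρfun n ^ (-v') = Real.exp (v' * ((n : ℕ) : ℝ) ^ (2 / b)) := by
      rw [hρfun, Real.rpow_def_of_pos (Real.exp_pos _), Real.log_exp]
      ring_nf
    have h4 : Real.exp (v * ((n + 1 : ℕ) : ℝ) ^ (2 / b))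
        < Real.exp (v' * ((n : ℕ) : ℝ) ^ (2 / b)) :=
      Real.exp_lt_exp.mpr (hkey n (le_trans (le_max_of_le_right (le_max_left _ _)) hnge)
        (le_trans (le_max_of_le_right (le_max_right _ _)) hnge))
    calc (j : ℝ) ≤ ρ ^ (-v) := hjρ
      _ ≤ ρfun (n + 1) ^ (-v) := h1
      _ = Real.exp (v * ((n + 1 : ℕ) : ℝ) ^ (2 / b)) := h2
      _ < Real.exp (v' * ((n : ℕ) : ℝ) ^ (2 / b)) := h4
      _ = ρfun n ^ (-v') := h3.symm
  have hyn : y ∉ A n := hy' n (le_trans (le_max_left _ _) hnge)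
  rw [hA, Set.mem_setOf_eq] at hyn
  push_neg at hyn
  have hd := hyn j hj hjlt
  linarith
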